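/- Define L(g) = N[(1−τ)(mL_g+αF) + (mg+F)mN]/(α+(Nm−α)τ) and p(g) = (L(g)+L_g)/(L(g)+L_g−αg) · [mw + α(1−τ)w/N]. Assume Nm > α, τ ∈ (0,1), F > 0, w > 0, L_g ≥ 0, and L(g)+L_g−αg > 0. Then dp/dg > 0: government purchase raises the equilibrium price. -/

import Mathlib

/-- Government purchase raises the equilibrium price. -/
theorem stmt_14 (α N m F w Lg τ : ℝ) (hα : 0 < α) (hN : 0 < N) (hm : 0 < m)
    (hF : 0 < F) (hw : 0 < w) (hLg : 0 ≤ Lg) (hτ0 : 0 < τ) (hτ1 : τ < 1)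
    (hNm : N * m > α) (g : ℝ) (hg : 0 ≤ g)
    (hden : 0 < N * ((1 - τ) * (m * Lg + α * F) + (m * g + F) * m * N) / (α + (N * m - α) * τ)
      + Lg - α * g) :
    0 < deriv (fun g : ℝ =>
        let L := N * ((1 - τ) * (m * Lg + α * F) + (m * g + F) * m * N) / (α + (N * m - α) * τ)
        (L + Lg) / (L + Lg - α * g) * (m * w + α * ((1 - τ) * w) / N)) g := by
  have hDpos : 0 < α + (N * m - α) * τ := by
    have : 0 < (N * m - α) * τ := mul_pos (by linarith) hτ0
    linarith
  obtain ⟨D, hD⟩ : ∃ D, D = α + (N * m - α) * τ := ⟨_, rfl⟩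
  rw [← hD] at hDpos
  obtain ⟨c, hc⟩ : ∃ c, c = N * ((1 - τ) * (m * Lg + α * F) + F * m * N) / D + Lg := ⟨_, rfl⟩
  obtain ⟨k, hk⟩ : ∃ k, k = N * (m * m * N) / D := ⟨_, rfl⟩
  have heq : ∀ x : ℝ, N * ((1 - τ) * (m * Lg + α * F) + (m * x + F) * m * N) / D + Lg
      = c + k * x := by
    intro x
    rw [hc, hk]
    field_simp
    ring
  have hcpos : 0 < c := by
    rw [hc]
    have h1 : 0 < (1 - τ) * (m * Lg + α * F) := by
      apply mul_pos (by linarith)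
      nlinarith [mul_nonneg hm.le hLg]
    have : 0 < N * ((1 - τ) * (m * Lg + α * F) + F * m * N) / D := by
      apply div_pos _ hDpos
      have : 0 < F * m * N := by positivity
      nlinarith
    linarith
  have hK : 0 < m * w + α * ((1 - τ) * w) / N := by
    have : 0 < α * ((1 - τ) * w) / N := by
      apply div_pos (mul_pos hα (mul_pos (by linarith) hw)) hN
    nlinarith
  have hfun : (fun g : ℝ =>
        let L := N * ((1 - τ) * (m * Lg + α * F) + (m * g + F) * m * N) / (α + (N * m - α) * τ)
        (L + Lg) / (L + Lg - α * g) * (m * w + α * ((1 - τ) * w) / N))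
      = fun x : ℝ => (c + k * x) / (c + (k - α) * x) * (m * w + α * ((1 - τ) * w) / N) := by
    funext x
    show (N * ((1 - τ) * (m * Lg + α * F) + (m * x + F) * m * N) / (α + (N * m - α) * τ) + Lg)
        / (N * ((1 - τ) * (m * Lg + α * F) + (m * x + F) * m * N) / (α + (N * m - α) * τ) + Lg
          - α * x) * (m * w + α * ((1 - τ) * w) / N) = _
    rw [← hD, heq x]
    ring_nf
  rw [hfun]
  have hdgpos : 0 < c + (k - α) * g := by
    rw [← hD] at hden
    have h1 := heq g
    nlinarith [hden]
  have hdg : c + (k - α) * g ≠ 0 := ne_of_gt hdgpos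
  have hnum : HasDerivAt (fun x : ℝ => c + k * x) k g := by
    simpa using ((hasDerivAt_id g).const_mul k).const_add c
  have hden' : HasDerivAt (fun x : ℝ => c + (k - α) * x) (k - α) g := by
    simpa using ((hasDerivAt_id g).const_mul (k - α)).const_add c
  have hdiv := (hnum.div hden' hdg).mul_const (m * w + α * ((1 - τ) * w) / N)
  rw [(show HasDerivAt (fun x : ℝ => (c + k * x) / (c + (k - α) * x) * (m * w + α * ((1 - τ) * w) / N)) _ g from hdiv).deriv]
  have key : k * (c + (k - α) * g) - (c + k * g) * (k - α) = α * c := by ring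
  rw [key]
  positivity
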